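/- Let p be an odd prime. Then -U_p = Q^{-2p} A Q^{-2} A^p, where A = [[1,0],[1,1]], Q = [[1,(p+1)/(2p)],[0,1]], U_p = [[p,0],[0,1/p]]. In particular U_p^2 lies in the subgroup generated by A and Q. -/

import Mathlib

abbrev SL2Q := Matrix.SpecialLinearGroup (Fin 2) ℚ

/-- A = [[1,0],[1,1]] -/
def matA : SL2Q := ⟨!![1,0;1,1], by norm_num [Matrix.det_fin_two_of]⟩
/-- B = [[0,1],[-1,0]] -/
def matB : SL2Q := ⟨!![0,1;-1,0], by norm_num [Matrix.det_fin_two_of]⟩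
/-- Q_q = [[1,q],[0,1]] -/
def matQ (q : ℚ) : SL2Q := ⟨!![1,q;0,1], by norm_num [Matrix.det_fin_two_of]⟩
/-- U_p = [[p,0],[0,1/p]] -/
def matU (p : ℚ) (hp : p ≠ 0) : SL2Q := ⟨!![p,0;0,p⁻¹], by rw [Matrix.det_fin_two_of]; field_simp; norm_num⟩
/-- lower unipotent [[1,0],[x,1]] -/
def matL (x : ℚ) : SL2Q := ⟨!![1,0;x,1], by norm_num [Matrix.det_fin_two_of]⟩

lemma matQ_mul (a b : ℚ) : matQ a * matQ b = matQ (a + b) := by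
  apply Subtype.ext
  show (!![1,a;0,1] : Matrix (Fin 2) (Fin 2) ℚ) * !![1,b;0,1] = _
  rw [Matrix.mul_fin_two]
  norm_num [matQ, add_comm]

lemma matQ_zero : matQ 0 = 1 := by
  apply Subtype.ext
  show (!![1,(0:ℚ);0,1] : Matrix (Fin 2) (Fin 2) ℚ) = 1
  rw [Matrix.one_fin_two]

lemma matQ_inv (a : ℚ) : (matQ a)⁻¹ = matQ (-a) := by
  apply inv_eq_of_mul_eq_one_right
  rw [matQ_mul, add_neg_cancel, matQ_zero]

lemma matQ_pow (a : ℚ) (n : ℕ) : matQ a ^ n = matQ (n * a) := by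
  induction n with
  | zero => simp [matQ_zero]
  | succ k ih => rw [pow_succ, ih, matQ_mul]; push_cast; ring_nf

lemma matL_mul (a b : ℚ) : matL a * matL b = matL (a + b) := by
  apply Subtype.ext
  show (!![1,0;a,1] : Matrix (Fin 2) (Fin 2) ℚ) * !![1,0;b,1] = _
  rw [Matrix.mul_fin_two]
  norm_num [matL, add_comm]

lemma matQ_zpow (a : ℚ) (n : ℤ) : matQ a ^ n = matQ (n * a) := by
  cases n with
  | ofNat m => rw [Int.ofNat_eq_coe, zpow_natCast, matQ_pow]; norm_num
  | negSucc m =>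
    rw [zpow_negSucc, matQ_pow, matQ_inv]
    congr 1
    simp [Int.negSucc_eq]
    push_cast
    ring

lemma matA_eq : matA = matL 1 := rfl

lemma matA_pow (n : ℕ) : matA ^ n = matL n := by
  induction n with
  | zero =>
    apply Subtype.ext
    show (1 : Matrix (Fin 2) (Fin 2) ℚ) = !![1,0;((0:ℕ):ℚ),1]
    rw [Matrix.one_fin_two]; norm_num
  | succ k ih => rw [pow_succ, ih, matA_eq, matL_mul]; push_cast; ring_nf

theorem stmt15 (p : ℕ) (hp : p.Prime) (hodd : Odd p) :
    -((matU p (Nat.cast_ne_zero.mpr hp.ne_zero) : Matrix (Fin 2) (Fin 2) ℚ)) =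
      (((matQ (((p:ℚ)+1)/(2*p)))^(-(2*(p:ℤ))) * matA * (matQ (((p:ℚ)+1)/(2*p)))^(-2:ℤ) * matA^p :
        SL2Q) : Matrix (Fin 2) (Fin 2) ℚ) ∧
    (matU p (Nat.cast_ne_zero.mpr hp.ne_zero))^2 ∈
      Subgroup.closure {matA, matQ (((p:ℚ)+1)/(2*p))} := by
  have hp0 : (p : ℚ) ≠ 0 := Nat.cast_ne_zero.mpr hp.ne_zero
  set q : ℚ := ((p:ℚ)+1)/(2*p) with hq
  have h1 : matQ q ^ (-(2*(p:ℤ))) = matQ (-((p:ℚ)+1)) := by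
    rw [matQ_zpow]
    congr 1
    rw [hq]
    push_cast
    field_simp
  have h2 : matQ q ^ (-2:ℤ) = matQ (-(((p:ℚ)+1)/p)) := by
    rw [matQ_zpow]
    congr 1
    rw [hq]
    push_cast
    field_simp
  have key : -((matU p hp0 : Matrix (Fin 2) (Fin 2) ℚ)) =
      (((matQ q)^(-(2*(p:ℤ))) * matA * (matQ q)^(-2:ℤ) * matA^p :
        SL2Q) : Matrix (Fin 2) (Fin 2) ℚ) := by
    rw [h1, h2, matA_pow]
    show -(!![(p:ℚ),0;0,(p:ℚ)⁻¹]) =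
      (!![1,-((p:ℚ)+1);0,1] * !![1,0;1,1] * !![1,-(((p:ℚ)+1)/p);0,1] * !![1,0;(p:ℚ),1])
    rw [Matrix.mul_fin_two, Matrix.mul_fin_two, Matrix.mul_fin_two]
    ext i j
    fin_cases i <;> fin_cases j <;> simp [Matrix.neg_apply]
    all_goals field_simp
    all_goals try ring
    all_goals tauto
  refine ⟨key, ?_⟩
  set M : SL2Q := (matQ q)^(-(2*(p:ℤ))) * matA * (matQ q)^(-2:ℤ) * matA^p with hM
  have hMmem : M ∈ Subgroup.closure {matA, matQ q} := by
    have hA : matA ∈ Subgroup.closure {matA, matQ q} :=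
      Subgroup.subset_closure (by simp)
    have hQ : matQ q ∈ Subgroup.closure {matA, matQ q} :=
      Subgroup.subset_closure (by simp)
    exact mul_mem (mul_mem (mul_mem (zpow_mem hQ _) hA) (zpow_mem hQ _)) (pow_mem hA _)
  have hU2 : (matU p hp0)^2 = M^2 := by
    apply Subtype.ext
    show ((matU p hp0 : Matrix (Fin 2) (Fin 2) ℚ))^2 = ((M : Matrix (Fin 2) (Fin 2) ℚ))^2
    rw [← key]
    exact (neg_sq _).symm
  rw [hU2]
  exact pow_mem hMmem 2
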